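/- Under Assumption 1, for all s ∈ X_c^0 and u ∈ U_c, Out ∈ δ_c(s,u) if and only if there exists σ ∈ Σ such that π_{I_σ^c}(Φ_σ(s_{I_σ},u_{J_σ})) is not a subset of 𝒳_{I_σ^c}. -/
import Mathlib


open Set Function

/-- `ℝⁿ` modeled as `Fin n → ℝ`. -/
abbrev Vec (n : ℕ) : Type := Fin n → ℝ

/-- Projection `π_{I'}` of a dependent tuple onto the components with indices in `I'`. -/
def proj {ι : Type*} (E : ι → Type*) (I' : Set ι) (x : (i : ι) → E i) : (i : I') → E i.1 :=
  fun i => x i.1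

/-- `P` is a finite partition of `A`: finitely many nonempty pairwise disjoint cells covering `A`. -/
def IsFinPartition {α : Type*} (P : Set (Set α)) (A : Set α) : Prop :=
  P.Finite ∧ (∀ s ∈ P, s.Nonempty) ∧ ⋃₀ P = A ∧
    ∀ s ∈ P, ∀ t ∈ P, s ≠ t → Disjoint s t

/-- The family `A : τ → Set α` is a partition of the index type `α`. -/
def IsIndexPartition {τ α : Type*} (A : τ → Set α) : Prop :=
  (⋃ σ, A σ) = Set.univ ∧ Pairwise (Disjoint on A)

/-- The set `𝒫` of cells `s₁ × ⋯ × s_n̄`, `s_i ∈ 𝒫_i`, of the product partition. -/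
def cells {ι : Type*} {E : ι → Type*} (P : (i : ι) → Set (Set (E i))) :
    Set (Set ((i : ι) → E i)) :=
  { s | ∃ f : (i : ι) → Set (E i), (∀ i, f i ∈ P i) ∧ s = Set.pi Set.univ f }

/-- The set `X_σ⁰` of cells `∏_{i ∈ I'} s_i`, `s_i ∈ 𝒫_i`, of the partition restricted to `I'`. -/
def cellsOn {ι : Type*} {E : ι → Type*} (P : (i : ι) → Set (Set (E i))) (I' : Set ι) :
    Set (Set ((i : I') → E i.1)) :=
  { s | ∃ f : (i : ι) → Set (E i), (∀ i, f i ∈ P i) ∧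
        s = Set.pi Set.univ (fun i : I' => f i.1) }

/-- `F(𝒳',𝒰') = ⋃_{x ∈ 𝒳', u ∈ 𝒰'} F(x,u)`. -/
def Fset {X U : Type*} (F : X → U → Set X) (A : Set X) (B : Set U) : Set X :=
  ⋃ x ∈ A, ⋃ u ∈ B, F x u

/-- `Φ_σ(s_σ,u_σ) = F̄(𝒳 ∩ π_{I_σ}⁻¹(s_σ), 𝒰 ∩ π_{J_σ}⁻¹({u_σ}))`. -/
def Phi {ι κ : Type*} (E : ι → Type*) (Fu : κ → Type*)
    (Fbar : Set ((i : ι) → E i) → Set ((j : κ) → Fu j) → Set ((i : ι) → E i))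
    (Xset : Set ((i : ι) → E i)) (Uset : Set ((j : κ) → Fu j))
    (Iσ : Set ι) (Jσ : Set κ)
    (sσ : Set ((i : Iσ) → E i.1)) (uσ : (j : Jσ) → Fu j.1) : Set ((i : ι) → E i) :=
  Fbar (Xset ∩ proj E Iσ ⁻¹' sσ) (Uset ∩ proj Fu Jσ ⁻¹' {uσ})

/-- `Out_σ = π_{I_σ}(ℝⁿ) \ 𝒳_{I_σ}`. -/
def OutOf {ι : Type*} (E : ι → Type*) (Iσ : Set ι) (Xset : Set ((i : ι) → E i)) :
    Set ((i : Iσ) → E i.1) :=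
  proj E Iσ '' Set.univ \ proj E Iσ '' Xset

/-- Transition map `δ_σ` of the symbolic subsystem `S_σ`. -/
def deltaSub {ι κ : Type*} (E : ι → Type*) (Fu : κ → Type*)
    (Fbar : Set ((i : ι) → E i) → Set ((j : κ) → Fu j) → Set ((i : ι) → E i))
    (Xset : Set ((i : ι) → E i)) (Uset : Set ((j : κ) → Fu j))
    (P : (i : ι) → Set (Set (E i))) (V : (j : κ) → Set (Fu j))
    (Iσ Icσ : Set ι) (Jσ : Set κ)
    (sσ : Set ((i : Iσ) → E i.1)) (uσ : (j : Jσ) → Fu j.1) :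
    Set (Set ((i : Iσ) → E i.1)) :=
  { s' | sσ ∈ cellsOn P Iσ ∧ uσ ∈ Set.pi Set.univ (fun j : Jσ => V j.1) ∧
      ((s' ∈ cellsOn P Iσ ∧
          (s' ∩ proj E Iσ '' Phi E Fu Fbar Xset Uset Iσ Jσ sσ uσ).Nonempty) ∨
        (s' = OutOf E Iσ Xset ∧
          (proj E Iσ '' Phi E Fu Fbar Xset Uset Iσ Jσ sσ uσ ∩ proj E Iσ '' Xset = ∅ ∨
            ¬proj E Icσ '' Phi E Fu Fbar Xset Uset Iσ Jσ sσ uσ ⊆ proj E Icσ '' Xset))) }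

/-- Transition map `δ_c` of the composed abstraction `S_c`. -/
def deltaC {ι κ τ : Type*} (E : ι → Type*) (Fu : κ → Type*)
    (Fbar : Set ((i : ι) → E i) → Set ((j : κ) → Fu j) → Set ((i : ι) → E i))
    (Xset : Set ((i : ι) → E i)) (Uset : Set ((j : κ) → Fu j))
    (P : (i : ι) → Set (Set (E i))) (V : (j : κ) → Set (Fu j))
    (Im Ic : τ → Set ι) (Jm : τ → Set κ)
    (s : Set ((i : ι) → E i)) (u : (j : κ) → Fu j) :
    Set (Set ((i : ι) → E i)) :=
  { s' | s ∈ cells P ∧ u ∈ Set.pi Set.univ V ∧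
      ((s' ∈ cells P ∧ ∀ σ : τ,
          proj E (Im σ) '' s' ∈
            deltaSub E Fu Fbar Xset Uset P V (Im σ) (Ic σ) (Jm σ)
              (proj E (Im σ) '' s) (proj Fu (Jm σ) u)) ∨
        (s' = Xsetᶜ ∧ ∃ σ : τ,
          OutOf E (Im σ) Xset ∈
            deltaSub E Fu Fbar Xset Uset P V (Im σ) (Ic σ) (Jm σ)
              (proj E (Im σ) '' s) (proj Fu (Jm σ) u))) }

/-- Safety controller for the transition map `δ` and the safe set `safe`. -/
def IsSafetyController {X U : Type*} (δ : X → U → Set X) (safe : Set X) (C : X → Set U) : Prop :=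
  (∀ x, ∀ u ∈ C x, (δ x u).Nonempty) ∧
  (∀ x, (C x).Nonempty → x ∈ safe) ∧
  (∀ x, ∀ u ∈ C x, ∀ x', x' ∈ δ x u → (C x').Nonempty)

/-- Maximal safety controller. -/
def IsMaximalSafetyController {X U : Type*} (δ : X → U → Set X) (safe : Set X)
    (Cstar : X → Set U) : Prop :=
  IsSafetyController δ safe Cstar ∧
    ∀ C, IsSafetyController δ safe C → ∀ x, C x ⊆ Cstar x

/-- Feedback refinement relation (over a common input type). -/
def IsFeedbackRefinement {Xa Xb U : Type*} (δa : Xa → U → Set Xa) (δb : Xb → U → Set Xb)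
    (H : Xa → Xb) : Prop :=
  ∀ xa : Xa,
    (∀ u, (δb (H xa) u).Nonempty → (δa xa u).Nonempty) ∧
    (∀ u, (δb (H xa) u).Nonempty → H '' δa xa u ⊆ δb (H xa) u)

/-- Concrete transition map of `S = (ℝⁿ, 𝒰, F)` (inputs restricted to `𝒰`). -/
def deltaConc {X U : Type*} (F : X → U → Set X) (Uset : Set U) (x : X) (u : U) : Set X :=
  { x' | u ∈ Uset ∧ x' ∈ F x u }

lemma proj_image_pi {ι : Type*} {E : ι → Type*} (I' : Set ι) (A : (i : ι) → Set (E i))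
    (hA : ∀ i, (A i).Nonempty) :
    proj E I' '' Set.pi Set.univ A = Set.pi Set.univ (fun i : I' => A i.1) := by
  ext y
  constructor
  · rintro ⟨x, hx, rfl⟩ i _
    exact hx i.1 trivial
  · intro hy
    classical
    choose a ha using hA
    refine ⟨fun i => if h : i ∈ I' then y ⟨i, h⟩ else a i, fun i _ => ?_, ?_⟩
    · by_cases h : i ∈ I'
      · simpa [h] using hy ⟨i, h⟩ trivial
      · simpa [h] using ha i
    · funext i
      simp [proj, i.2]

theorem stmt2
    {ι κ τ : Type*} [Finite ι] [Finite κ] [Finite τ]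
    (nd : ι → ℕ) (pd : κ → ℕ)
    (𝒳i : (i : ι) → Set (Vec (nd i))) (𝒰j : (j : κ) → Set (Vec (pd j)))
    (F : ((i : ι) → Vec (nd i)) → ((j : κ) → Vec (pd j)) → Set ((i : ι) → Vec (nd i)))
    (Fbar : Set ((i : ι) → Vec (nd i)) → Set ((j : κ) → Vec (pd j)) →
      Set ((i : ι) → Vec (nd i)))
    (P : (i : ι) → Set (Set (Vec (nd i)))) (V : (j : κ) → Set (Vec (pd j)))
    (Im Ic : τ → Set ι) (Jm : τ → Set κ)
    (hF : ∀ x u, u ∈ Set.pi Set.univ 𝒰j → (F x u).Nonempty)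
    (hFbar : ∀ A B, Fset F A B ⊆ Fbar A B)
    (hP : ∀ i, IsFinPartition (P i) (𝒳i i))
    (hV : ∀ j, (V j).Finite ∧ V j ⊆ 𝒰j j)
    (hIc : IsIndexPartition Ic) (hIcne : ∀ σ, (Ic σ).Nonempty) (hIcIm : ∀ σ, Ic σ ⊆ Im σ)
    (hJ : IsIndexPartition Jm) (hJne : ∀ σ, (Jm σ).Nonempty) :
    ∀ s ∈ cells P, ∀ u ∈ Set.pi Set.univ V,
      ((Set.pi Set.univ 𝒳i)ᶜ ∈ deltaC (fun i => Vec (nd i)) (fun j => Vec (pd j)) Fbar (Set.pi Set.univ 𝒳i) (Set.pi Set.univ 𝒰j) P V Im Ic Jm s u ↔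
        ∃ σ, ¬proj (fun i => Vec (nd i)) (Ic σ) ''
            Phi (fun i => Vec (nd i)) (fun j => Vec (pd j)) Fbar (Set.pi Set.univ 𝒳i) (Set.pi Set.univ 𝒰j) (Im σ) (Jm σ) (proj (fun i => Vec (nd i)) (Im σ) '' s) (proj (fun j => Vec (pd j)) (Jm σ) u) ⊆
          proj (fun i => Vec (nd i)) (Ic σ) '' (Set.pi Set.univ 𝒳i)) := by
  set E := fun i => Vec (nd i)
  set Fu := fun j => Vec (pd j)
  set Xset := Set.pi Set.univ 𝒳i with hXset
  set Uset := Set.pi Set.univ 𝒰j with hUset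
  rintro s hs u hu
  obtain ⟨f, hf, rfl⟩ := hs
  have hfne : ∀ i, (f i).Nonempty := fun i => (hP i).2.1 _ (hf i)
  have hfsub : ∀ i, f i ⊆ 𝒳i i := by
    intro i
    rw [← (hP i).2.2.1]
    exact Set.subset_sUnion_of_mem (hf i)
  have hXne : ∀ i, (𝒳i i).Nonempty := fun i => (hfne i).mono (hfsub i)
  have hsX : Set.pi Set.univ f ⊆ Xset := Set.pi_mono (fun i _ => hfsub i)
  have hsne : (Set.pi Set.univ f).Nonempty := Set.univ_pi_nonempty_iff.mpr hfne
  have huU : u ∈ Uset := fun j _ => (hV j).2 (hu j trivial)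
  obtain ⟨x, hx⟩ := hsne
  obtain ⟨z, hz⟩ := hF x u huU
  -- the witness z lies in every Phi
  have hzPhi : ∀ σ, z ∈ Phi E Fu Fbar Xset Uset (Im σ) (Jm σ)
      (proj E (Im σ) '' Set.pi Set.univ f) (proj Fu (Jm σ) u) := by
    intro σ
    apply hFbar
    exact Set.mem_biUnion ⟨hsX hx, Set.mem_image_of_mem _ hx⟩
      (Set.mem_biUnion ⟨huU, rfl⟩ hz)
  have hprojX : ∀ I' : Set ι, proj E I' '' Xset = Set.pi Set.univ (fun i : I' => 𝒳i i.1) :=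
    fun I' => proj_image_pi I' 𝒳i hXne
  constructor
  · intro h
    obtain ⟨-, -, h⟩ := h
    rcases h with ⟨hc, -⟩ | ⟨-, σ, hd⟩
    · -- Xsetᶜ cannot be a cell
      exfalso
      obtain ⟨g, hg, hEq⟩ := hc
      have hgne : ∀ i, (g i).Nonempty := fun i => (hP i).2.1 _ (hg i)
      obtain ⟨w, hw⟩ := Set.univ_pi_nonempty_iff.mpr hgne
      have hwX : w ∈ Xset := fun i _ => by
        have : g i ⊆ 𝒳i i := by
          rw [← (hP i).2.2.1]; exact Set.subset_sUnion_of_mem (hg i)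
        exact this (hw i trivial)
      have : w ∈ Xsetᶜ := hEq ▸ hw
      exact this hwX
    · obtain ⟨-, -, hor⟩ := hd
      rcases hor with ⟨hcell, -⟩ | ⟨-, hor2⟩
      · -- OutOf cannot be a cell
        exfalso
        obtain ⟨g, hg, hEq⟩ := hcell
        have hgne : ∀ i, (g i).Nonempty := fun i => (hP i).2.1 _ (hg i)
        obtain ⟨w, hw⟩ := Set.univ_pi_nonempty_iff.mpr (fun i : Im σ => hgne i.1)
        have hwout : w ∈ OutOf E (Im σ) Xset := hEq ▸ hw
        have hwX : w ∈ proj E (Im σ) '' Xset := by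
          rw [hprojX]
          intro i _
          have : g i.1 ⊆ 𝒳i i.1 := by
            rw [← (hP i.1).2.2.1]; exact Set.subset_sUnion_of_mem (hg i.1)
          exact this (hw i trivial)
        exact hwout.2 hwX
      · rcases hor2 with hEmp | hns
        · -- empty-intersection case: chase the witness z
          have hzout : proj E (Im σ) z ∉ proj E (Im σ) '' Xset := by
            intro hmem
            have : proj E (Im σ) z ∈ proj E (Im σ) ''
                Phi E Fu Fbar Xset Uset (Im σ) (Jm σ)
                  (proj E (Im σ) '' Set.pi Set.univ f) (proj Fu (Jm σ) u) ∩
                proj E (Im σ) '' Xset :=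
              ⟨Set.mem_image_of_mem _ (hzPhi σ), hmem⟩
            rw [hEmp] at this
            exact this
          rw [hprojX] at hzout
          have : ∃ i : ι, i ∈ Im σ ∧ z i ∉ 𝒳i i := by
            by_contra hcon
            push_neg at hcon
            exact hzout (fun i _ => hcon i.1 i.2)
          obtain ⟨i, -, hzi⟩ := this
          have : i ∈ ⋃ σ', Ic σ' := hIc.1 ▸ Set.mem_univ i
          obtain ⟨σ', hiσ'⟩ := Set.mem_iUnion.mp this
          refine ⟨σ', fun hsub => ?_⟩
          have := hsub (Set.mem_image_of_mem _ (hzPhi σ'))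
          rw [hprojX] at this
          exact hzi (this ⟨i, hiσ'⟩ trivial)
        · exact ⟨σ, hns⟩
  · rintro ⟨σ, hns⟩
    refine ⟨⟨f, hf, rfl⟩, hu, Or.inr ⟨rfl, σ, ?_, ?_, Or.inr ⟨rfl, Or.inr hns⟩⟩⟩
    · exact ⟨f, hf, proj_image_pi (Im σ) f hfne⟩
    · exact fun j _ => hu j.1 trivial
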